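/- Let p ≥ 1, 1 ≤ k < p. Let U₁ ∈ ℝ^{p×k}, U₂ ∈ ℝ^{p×(p−k)} have orthonormal columns with U₁ᵀU₂ = 0, and let Û₁ ∈ ℝ^{p×k} have orthonormal columns; write Π₁ := U₁U₁ᵀ and Π̂₁ := Û₁Û₁ᵀ. Let φ_1, …, φ_n ∈ ℝ^p, ε_1, …, ε_n ∈ ℝ, β ∈ ℝ^p with β = Π₁β, and δ_1, …, δ_n ∈ ℝ^p with δ_t = U₂U₂ᵀδ_t for each t. Set r_t := φ_tᵀ(β + δ_t) + ε_t, Σ̂ := Σ_{t=1}^n φ_t φ_tᵀ, assume Σ̃ := Û₁ᵀ Σ̂ Û₁ is invertible, and define β̂ := Û₁ Σ̃^{-1} Σ_{t=1}^n Û₁ᵀ φ_t r_t. Then ‖ β̂ − Π̂₁ β ‖_{Σ̂} ≤ ‖ Û₁ᵀ Σ̂ (Π₁ − Π̂₁) β ‖_{Σ̃^{-1}} + ‖ Σ_{t=1}^n Û₁ᵀ φ_t φ_tᵀ δ_t ‖_{Σ̃^{-1}} + ‖ Σ_{t=1}^n Û₁ᵀ φ_t ε_t ‖_{Σ̃^{-1}}.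 -/

import Mathlib

open Matrix

noncomputable def wnorm {k : ℕ} (A : Matrix (Fin k) (Fin k) ℝ) (x : Fin k → ℝ) : ℝ :=
  Real.sqrt (x ⬝ᵥ A.mulVec x)

lemma mulVec_dot {m n : Type*} [Fintype m] [Fintype n] (A : Matrix m n ℝ) (x : n → ℝ) (y : m → ℝ) :
    A.mulVec x ⬝ᵥ y = x ⬝ᵥ Aᵀ.mulVec y := by
  rw [dotProduct_comm, dotProduct_mulVec, ← mulVec_transpose, dotProduct_comm]

lemma sqrt_dot_triangle {k : ℕ} (u v : Fin k → ℝ) :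
    Real.sqrt ((u + v) ⬝ᵥ (u + v)) ≤ Real.sqrt (u ⬝ᵥ u) + Real.sqrt (v ⬝ᵥ v) := by
  have h : ∀ w : Fin k → ℝ, Real.sqrt (w ⬝ᵥ w)
      = ‖(WithLp.equiv 2 (Fin k → ℝ)).symm w‖ := by
    intro w
    rw [EuclideanSpace.norm_eq]
    congr 1
    simp [dotProduct, Real.norm_eq_abs, sq_abs, sq]
  rw [h, h, h, WithLp.equiv_symm_apply, WithLp.toLp_add]
  exact norm_add_le _ _

open scoped MatrixOrder in
lemma wnorm_add_le {k : ℕ} {A : Matrix (Fin k) (Fin k) ℝ} (hA : A.PosSemidef)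
    (x y : Fin k → ℝ) : wnorm A (x + y) ≤ wnorm A x + wnorm A y := by
  set S := CFC.sqrt A with hS
  have hSS : S * S = A := by rw [← pow_two]; exact CFC.sq_sqrt A hA.nonneg
  have hSt : Sᵀ = S := by
    have := (CFC.sqrt_nonneg A).posSemidef.isHermitian
    rwa [Matrix.IsHermitian, conjTranspose_eq_transpose_of_trivial] at this
  have key : ∀ w : Fin k → ℝ, w ⬝ᵥ A.mulVec w = (S.mulVec w) ⬝ᵥ (S.mulVec w) := by
    intro w
    rw [mulVec_dot, hSt, ← hSS, ← mulVec_mulVec]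
  simp only [wnorm, key]
  rw [mulVec_add]
  exact sqrt_dot_triangle _ _

lemma sum_mulVec' {m n ι : Type*} [Fintype m] [Fintype n] [Fintype ι]
    (M : ι → Matrix m n ℝ) (x : n → ℝ) :
    (∑ t, M t).mulVec x = ∑ t, (M t).mulVec x := by
  ext i
  simp [mulVec, dotProduct, Matrix.sum_apply, Finset.sum_apply, Finset.sum_mul]
  rw [Finset.sum_comm]

lemma mulVec_sum' {m n ι : Type*} [Fintype m] [Fintype n] [Fintype ι]
    (M : Matrix m n ℝ) (v : ι → n → ℝ) :
    M.mulVec (∑ t, v t) = ∑ t, M.mulVec (v t) := by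
  ext i
  simp [mulVec, dotProduct, Finset.sum_apply, Finset.mul_sum]
  rw [Finset.sum_comm]

lemma vecMulVec_mulVec' {m n : Type*} [Fintype n] (u : m → ℝ) (v : n → ℝ) (x : n → ℝ) :
    (vecMulVec u v).mulVec x = (v ⬝ᵥ x) • u := by
  ext i
  simp only [mulVec, dotProduct, vecMulVec_apply, Pi.smul_apply, smul_eq_mul, Finset.sum_mul]
  exact Finset.sum_congr rfl fun j _ => by ring

set_option maxHeartbeats 1000000 in
/-- invariant-component error decomposition, estimated subspace.
With `Π₁ = U₁U₁ᵀ`, `Π̂₁ = Û₁Û₁ᵀ`, `β = Π₁ β`, `δ_t = U₂U₂ᵀ δ_t`,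
`r_t = φ_tᵀ(β + δ_t) + ε_t`, `Σ̂ = ∑ φ_t φ_tᵀ`, `Σ̃ = Û₁ᵀ Σ̂ Û₁` invertible, and
`β̂ = Û₁ Σ̃⁻¹ ∑ Û₁ᵀ φ_t r_t`, one has the three-term decomposition
`‖β̂ − Π̂₁β‖_{Σ̂} ≤ ‖Û₁ᵀ Σ̂ (Π₁ − Π̂₁)β‖_{Σ̃⁻¹} + ‖∑ Û₁ᵀ φ_t φ_tᵀ δ_t‖_{Σ̃⁻¹}
  + ‖∑ Û₁ᵀ φ_t ε_t‖_{Σ̃⁻¹}`. -/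
theorem stmt18 {p k n : ℕ} (hp : 1 ≤ p) (hk1 : 1 ≤ k) (hkp : k < p)
    (U₁ Uhat₁ : Matrix (Fin p) (Fin k) ℝ) (U₂ : Matrix (Fin p) (Fin (p - k)) ℝ)
    (hU₁ : U₁ᵀ * U₁ = 1) (hU₂ : U₂ᵀ * U₂ = 1) (hU₁₂ : U₁ᵀ * U₂ = 0)
    (hUhat₁ : Uhat₁ᵀ * Uhat₁ = 1)
    (φ : Fin n → Fin p → ℝ) (ε : Fin n → ℝ)
    (β : Fin p → ℝ) (hβ : β = (U₁ * U₁ᵀ).mulVec β)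
    (δ : Fin n → Fin p → ℝ) (hδ : ∀ t, δ t = (U₂ * U₂ᵀ).mulVec (δ t))
    (r : Fin n → ℝ) (hr : ∀ t, r t = φ t ⬝ᵥ (β + δ t) + ε t)
    (Shat : Matrix (Fin p) (Fin p) ℝ) (hShat : Shat = ∑ t, vecMulVec (φ t) (φ t))
    (Stil : Matrix (Fin k) (Fin k) ℝ) (hStil : Stil = Uhat₁ᵀ * Shat * Uhat₁)
    (hinv : IsUnit Stil)
    (βhat : Fin p → ℝ)
    (hβhat : βhat = Uhat₁.mulVec (Stil⁻¹.mulVec (∑ t, r t • Uhat₁ᵀ.mulVec (φ t)))) :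
    wnorm Shat (βhat - (Uhat₁ * Uhat₁ᵀ).mulVec β)
      ≤ wnorm Stil⁻¹
          ((Uhat₁ᵀ * Shat).mulVec ((U₁ * U₁ᵀ - Uhat₁ * Uhat₁ᵀ).mulVec β))
        + wnorm Stil⁻¹ (∑ t, (φ t ⬝ᵥ δ t) • Uhat₁ᵀ.mulVec (φ t))
        + wnorm Stil⁻¹ (∑ t, ε t • Uhat₁ᵀ.mulVec (φ t)) := by
  have hdet : IsUnit Stil.det := (Matrix.isUnit_iff_isUnit_det Stil).mp hinv
  have hinvmul : Stil⁻¹ * Stil = 1 := Matrix.nonsing_inv_mul _ hdet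
  -- symmetry facts
  have hShatT : Shatᵀ = Shat := by
    ext i j
    simp [hShat, transpose_apply, Matrix.sum_apply, vecMulVec_apply, mul_comm]
  have hStilT : Stilᵀ = Stil := by
    rw [hStil, transpose_mul, transpose_mul, transpose_transpose, hShatT, Matrix.mul_assoc]
  have hStilInvT : Stil⁻¹ᵀ = Stil⁻¹ := by rw [transpose_nonsing_inv, hStilT]
  -- positive semidefiniteness
  have hShatPSD : Shat.PosSemidef := by
    have hfact : Shat = (Matrix.of φ)ᵀ * Matrix.of φ := by
      ext i j
      simp [hShat, Matrix.mul_apply, Matrix.sum_apply, vecMulVec_apply, transpose_apply,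
        mul_comm]
    have := posSemidef_conjTranspose_mul_self (Matrix.of φ)
    rwa [conjTranspose_eq_transpose_of_trivial, ← hfact] at this
  have hStilPSD : Stil.PosSemidef := by
    have := hShatPSD.conjTranspose_mul_mul_same Uhat₁
    rwa [conjTranspose_eq_transpose_of_trivial, ← hStil] at this
  have hInvPSD : Stil⁻¹.PosSemidef := by
    have h2 := hStilPSD.conjTranspose_mul_mul_same Stil⁻¹
    have e : Stil⁻¹ᴴ * Stil * Stil⁻¹ = Stil⁻¹ := by
      rw [conjTranspose_eq_transpose_of_trivial, hStilInvT, hinvmul, one_mul]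
    rwa [e] at h2
  -- abbreviations
  set a₁ := (Uhat₁ᵀ * Shat).mulVec ((U₁ * U₁ᵀ - Uhat₁ * Uhat₁ᵀ).mulVec β) with ha₁def
  set a₂ := ∑ t, (φ t ⬝ᵥ δ t) • Uhat₁ᵀ.mulVec (φ t) with ha₂def
  set a₃ := ∑ t, ε t • Uhat₁ᵀ.mulVec (φ t) with ha₃def
  -- the regression target decomposition
  have h2 : (Uhat₁ᵀ * Shat).mulVec β = ∑ t, (φ t ⬝ᵥ β) • Uhat₁ᵀ.mulVec (φ t) := by
    rw [← mulVec_mulVec, hShat, sum_mulVec']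
    simp only [vecMulVec_mulVec']
    rw [mulVec_sum']
    simp only [mulVec_smul]
  have hb : (∑ t, r t • Uhat₁ᵀ.mulVec (φ t)) = (Uhat₁ᵀ * Shat).mulVec β + a₂ + a₃ := by
    rw [h2, ha₂def, ha₃def, ← Finset.sum_add_distrib, ← Finset.sum_add_distrib]
    refine Finset.sum_congr rfl fun t _ => ?_
    rw [hr t, dotProduct_add, add_smul, add_smul]
  have ha₁ : a₁ = (Uhat₁ᵀ * Shat).mulVec β - Stil.mulVec (Uhat₁ᵀ.mulVec β) := by
    rw [ha₁def, sub_mulVec, mulVec_sub]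
    congr 1
    · rw [← hβ]
    · rw [mulVec_mulVec, mulVec_mulVec, hStil]
      rw [← Matrix.mul_assoc (Uhat₁ᵀ * Shat) Uhat₁ Uhat₁ᵀ]
  -- key1 : error vector as Uhat₁ (Stil⁻¹ (a₁+a₂+a₃))
  have key1 : βhat - (Uhat₁ * Uhat₁ᵀ).mulVec β
      = Uhat₁.mulVec (Stil⁻¹.mulVec (a₁ + a₂ + a₃)) := by
    have hπ : (Uhat₁ * Uhat₁ᵀ).mulVec β
        = Uhat₁.mulVec (Stil⁻¹.mulVec (Stil.mulVec (Uhat₁ᵀ.mulVec β))) := by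
      rw [mulVec_mulVec, mulVec_mulVec, mulVec_mulVec, Matrix.mul_assoc Uhat₁, hinvmul,
        Matrix.mul_one]
    rw [hβhat, hπ, ← mulVec_sub Uhat₁, ← mulVec_sub Stil⁻¹, hb, ha₁]
    have e : ((Uhat₁ᵀ * Shat).mulVec β + a₂ + a₃) - Stil.mulVec (Uhat₁ᵀ.mulVec β)
        = ((Uhat₁ᵀ * Shat).mulVec β - Stil.mulVec (Uhat₁ᵀ.mulVec β)) + a₂ + a₃ := by abel
    rw [e]
  -- key2 : quadratic form transfer
  have key2 : ∀ a : Fin k → ℝ,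
      wnorm Shat (Uhat₁.mulVec (Stil⁻¹.mulVec a)) = wnorm Stil⁻¹ a := by
    intro a
    unfold wnorm
    congr 1
    rw [mulVec_dot Uhat₁, mulVec_dot Stil⁻¹, hStilInvT]
    congr 1
    simp only [mulVec_mulVec]
    congr 1
    simp only [← Matrix.mul_assoc]
    rw [Matrix.mul_assoc Stil⁻¹ Uhat₁ᵀ Shat, Matrix.mul_assoc Stil⁻¹ (Uhat₁ᵀ * Shat) Uhat₁,
      ← hStil, hinvmul, Matrix.one_mul]
  rw [key1, key2]
  calc wnorm Stil⁻¹ (a₁ + a₂ + a₃)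
      ≤ wnorm Stil⁻¹ (a₁ + a₂) + wnorm Stil⁻¹ a₃ := wnorm_add_le hInvPSD _ _
    _ ≤ wnorm Stil⁻¹ a₁ + wnorm Stil⁻¹ a₂ + wnorm Stil⁻¹ a₃ := by
        have := wnorm_add_le hInvPSD a₁ a₂
        linarith
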